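/- For every n ≥ 3, the decycling number of the Cartesian product C₃ □ Cₙ satisfies ∇(C₃ □ Cₙ) ≥ n + 1. -/

import Mathlib

open SimpleGraph

/-- `S` is a decycling set of `G` if the subgraph of `G` induced on the complement of `S`
is acyclic. -/
def SimpleGraph.IsDecyclingSet {V : Type*} (G : SimpleGraph V) (S : Set V) : Prop :=
  (G.induce Sᶜ).IsAcyclic

/-- The decycling number `∇(G)` of `G`: the minimum cardinality of a decycling set of `G`. -/
noncomputable def SimpleGraph.decyclingNumber {V : Type*} (G : SimpleGraph V) : ℕ :=
  sInf {k | ∃ S : Set V, G.IsDecyclingSet S ∧ S.ncard = k}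

open SimpleGraph Walk in
lemma isAcyclic_card_edgeFinset_add_one_le {V : Type*} [Fintype V] [Nonempty V]
    {G : SimpleGraph V} [Fintype G.edgeSet] (hG : G.IsAcyclic) :
    G.edgeFinset.card + 1 ≤ Fintype.card V := by
  classical
  set r : V → V := fun w => (G.connectedComponentMk w).out with hr_def
  have hout : ∀ w, G.connectedComponentMk (r w) = G.connectedComponentMk w := by
    intro w
    exact Quot.out_eq _
  have hreach : ∀ w, G.Reachable w (r w) := fun w =>
    (ConnectedComponent.exact (hout w)).symm
  have hrr : ∀ w, r (r w) = r w := by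
    intro w
    simp only [hr_def]
    congr 1
    exact hout w
  have hradj : ∀ {a b : V}, G.Adj a b → r a = r b := by
    intro a b hab
    simp only [hr_def, ConnectedComponent.connectedComponentMk_eq_of_adj hab]
  have key : ∀ w, ∃! p : G.Walk w (r w), p.IsPath := by
    intro w
    obtain ⟨p0⟩ := hreach w
    refine ⟨p0.toPath.1, p0.toPath.2, fun q hq => ?_⟩
    exact Subtype.ext_iff.mp (hG.path_unique ⟨q, hq⟩ p0.toPath)
  choose f hf hf' using key
  have hcard : G.edgeFinset.card = (Finset.univ.filter (fun w => w ≠ r w)).card := by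
    refine (Finset.card_bij
      (fun w hw => ((f w).firstDart <| not_nil_of_ne (by
        simpa using (Finset.mem_filter.mp hw).2)).edge)
      (fun a ha => by simp) ?_ ?_).symm
    · intros a ha b hb h
      have ha' := (Finset.mem_filter.mp ha).2
      have hb' := (Finset.mem_filter.mp hb).2
      wlog h' : (f a).length ≤ (f b).length generalizing a b
      · exact Eq.symm (this _ hb _ ha h.symm hb' ha' (le_of_not_ge h'))
      rw [dart_edge_eq_iff] at h
      obtain (h | h) := h
      · exact (congrArg (·.fst) h)
      · have h1 : ((f a).firstDart <| not_nil_of_ne (by simpa using ha')).snd = b :=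
          congrArg (·.snd) h
        have hadj : G.Adj a b := h1 ▸ ((f a).firstDart _).adj
        have h3 := congrArg Walk.length (hf' _ ((f a).tail.copy h1 (hradj hadj)) ?_)
        · erw [Walk.length_copy, ← add_left_inj 1,
            length_tail_add_one (not_nil_of_ne (by simpa using ha'))] at h3
          omega
        · simp only [ne_eq, eq_mp_eq_cast, id_eq, isPath_copy]
          exact (isPath_copy _ _ _).2 (hf _).tail
    · simp only [mem_edgeFinset, Sym2.forall, SimpleGraph.mem_edgeSet]
      intros x y h
      wlog h' : (f x).length ≤ (f y).length generalizing x y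
      · obtain ⟨w, hw1, hw2⟩ := this y x h.symm (le_of_not_ge h')
        exact ⟨w, hw1, hw2.trans Sym2.eq_swap⟩
      have hrxy : r x = r y := hradj h
      refine ⟨y, Finset.mem_filter.mpr ⟨Finset.mem_univ _, fun hyr => ?_⟩,
        dart_edge_eq_mk'_iff.2 <| Or.inr ?_⟩
      · -- y = r y leads to contradiction
        have hfy : f y = Walk.nil.copy rfl hyr := by
          rw [← hf' _ (Walk.nil.copy rfl hyr) (by simp)]
        have hfx : f x = (Walk.cons h Walk.nil).copy rfl (hyr ▸ hrxy.symm ▸ rfl) := by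
          rw [← hf' _ ((Walk.cons h Walk.nil).copy rfl (hyr ▸ hrxy.symm ▸ rfl))
            (by simp only [isPath_copy]; exact IsPath.nil.cons <| by simpa using h.ne)]
        rw [hfx, hfy] at h'
        simp at h'
      have hfy : f y = ((Walk.cons h.symm (f x)).copy rfl hrxy) :=
        (hf' _ ((Walk.cons h.symm (f x)).copy rfl hrxy)
            ((isPath_copy _ _ _).2 <| (cons_isPath_iff _ _).2 ⟨hf _, fun hy => ?contra⟩)).symm
      · have h2 : (f y).getVert 1 = x := by
          rw [hfy]
          simp [Walk.getVert_copy, Walk.getVert_cons_succ]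
        simp only [firstDart_toProd, Prod.swap_prod_mk]
        exact Prod.ext rfl h2
      case contra =>
        -- hy : y ∈ (f x).support, derive False using h'
        have htake : (f x).takeUntil y hy = Walk.cons h Walk.nil :=
          Subtype.ext_iff.mp (hG.path_unique ⟨_, (hf x).takeUntil hy⟩
            ⟨Walk.cons h Walk.nil, IsPath.nil.cons <| by simpa using h.ne⟩)
        have hdrop : f y = ((f x).dropUntil y hy).copy rfl hrxy := by
          rw [← hf' _ (((f x).dropUntil y hy).copy rfl hrxy)
            ((isPath_copy _ _ _).2 <| (hf x).dropUntil hy)]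
        have hlen := congrArg Walk.length ((f x).take_spec hy).symm
        rw [length_append, htake] at hlen
        rw [hdrop, length_copy] at h'
        simp only [length_cons, length_nil] at hlen
        omega
  rw [hcard]
  have : r (Classical.arbitrary V) ∉ Finset.univ.filter (fun w => w ≠ r w) := by
    simp [hrr]
  have hlt : Finset.univ.filter (fun w => w ≠ r w) ⊂ Finset.univ :=
    Finset.ssubset_univ_iff.mpr (by
      intro hh
      exact this (by rw [hh]; exact Finset.mem_univ _))
  have := Finset.card_lt_card hlt
  simpa [Finset.card_univ] using this

open SimpleGraph Walk

lemma edgeFinset_cover {V : Type*} [Fintype V] [DecidableEq V] (G : SimpleGraph V)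
    [Fintype G.edgeSet] (S : Set V) [DecidablePred (· ∈ S)]
    [Fintype (G.induce Sᶜ).edgeSet] [∀ v, Fintype (G.neighborSet v)] :
    G.edgeFinset ⊆ S.toFinset.biUnion (fun v => G.incidenceFinset v) ∪
      ((G.induce Sᶜ).edgeFinset.image (Sym2.map (Subtype.val : ↥Sᶜ → V))) := by
  intro e he
  induction e using Sym2.ind with
  | _ u v =>
    rw [Finset.mem_union]
    have hadj : G.Adj u v := by simpa using he
    by_cases hu : u ∈ S
    · left
      exact Finset.mem_biUnion.mpr ⟨u, Set.mem_toFinset.mpr hu,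
        (mem_incidenceFinset G u s(u, v)).mpr ⟨(G.mem_edgeSet).mpr hadj, by simp⟩⟩
    by_cases hv : v ∈ S
    · left
      exact Finset.mem_biUnion.mpr ⟨v, Set.mem_toFinset.mpr hv,
        (mem_incidenceFinset G v s(u, v)).mpr ⟨(G.mem_edgeSet).mpr hadj, by simp⟩⟩
    · right
      refine Finset.mem_image.mpr ⟨s(⟨u, hu⟩, ⟨v, hv⟩), ?_, by simp⟩
      rw [mem_edgeFinset, SimpleGraph.mem_edgeSet]
      simpa using hadj

theorem decyclingNumber_C3_boxProd_Cn_ge (n : ℕ) (hn : 3 ≤ n) :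
    n + 1 ≤ (cycleGraph 3 □ cycleGraph n).decyclingNumber := by
  classical
  obtain ⟨m, rfl⟩ : ∃ m, n = m + 3 := ⟨n - 3, by omega⟩
  have hdeg : ∀ (v : Fin 3 × Fin (m + 3))
      (inst : Fintype ((cycleGraph 3 □ cycleGraph (m + 3)).neighborSet v)),
      @SimpleGraph.degree _ _ v inst = 4 := by
    intro v inst
    rw [degree_boxProd, cycleGraph_degree_three_le (n := 0), cycleGraph_degree_three_le]
  have hE : 2 * (cycleGraph 3 □ cycleGraph (m + 3)).edgeFinset.card = 12 * (m + 3) := by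
    have h2 := (cycleGraph 3 □ cycleGraph (m + 3)).sum_degrees_eq_twice_card_edges
    simp only [hdeg] at h2
    rw [Finset.sum_const, smul_eq_mul,
      Finset.card_univ, Fintype.card_prod, Fintype.card_fin, Fintype.card_fin] at h2
    omega
  have hdec_univ : (cycleGraph 3 □ cycleGraph (m + 3)).IsDecyclingSet Set.univ := by
    intro v c hc
    exact absurd v.2 (by simp)
  rw [SimpleGraph.decyclingNumber]
  refine le_csInf ⟨_, Set.univ, hdec_univ, rfl⟩ ?_
  rintro k ⟨S, hS, rfl⟩
  by_cases hSc : Sᶜ = (∅ : Set (Fin 3 × Fin (m + 3)))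
  · have hSu : S = Set.univ := Set.compl_empty_iff.mp hSc
    rw [hSu, Set.ncard_univ, Nat.card_eq_fintype_card, Fintype.card_prod,
      Fintype.card_fin, Fintype.card_fin]
    omega
  · haveI : Nonempty ↥(Sᶜ) := Set.nonempty_coe_sort.mpr (Set.nonempty_iff_ne_empty.mpr hSc)
    have hac := isAcyclic_card_edgeFinset_add_one_le
      (G := (cycleGraph 3 □ cycleGraph (m + 3)).induce Sᶜ) hS
    have hcompl : Fintype.card ↥(Sᶜ) + S.ncard = 3 * (m + 3) := by
      have h1 : Fintype.card ↥(Sᶜ) = Sᶜ.ncard := by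
        rw [← Nat.card_coe_set_eq, Nat.card_eq_fintype_card]
      have h2 := Set.ncard_add_ncard_compl S
      rw [Nat.card_eq_fintype_card, Fintype.card_prod, Fintype.card_fin, Fintype.card_fin] at h2
      omega
    have hcover := Finset.card_le_card
      (edgeFinset_cover (cycleGraph 3 □ cycleGraph (m + 3)) S)
    have hcard1 : (S.toFinset.biUnion
        (fun v => (cycleGraph 3 □ cycleGraph (m + 3)).incidenceFinset v)).card
        ≤ 4 * S.ncard := by
      calc (S.toFinset.biUnion
            (fun v => (cycleGraph 3 □ cycleGraph (m + 3)).incidenceFinset v)).card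
          ≤ ∑ v ∈ S.toFinset,
              ((cycleGraph 3 □ cycleGraph (m + 3)).incidenceFinset v).card :=
            Finset.card_biUnion_le
        _ = ∑ v ∈ S.toFinset, 4 := by
            refine Finset.sum_congr rfl fun v _ => ?_
            rw [card_incidenceFinset_eq_degree, hdeg]
        _ = 4 * S.ncard := by
            rw [Finset.sum_const, smul_eq_mul, Set.ncard_eq_toFinset_card']
            omega
    have hcard2 : ((((cycleGraph 3 □ cycleGraph (m + 3)).induce Sᶜ).edgeFinset).image
        (Sym2.map (Subtype.val : ↥Sᶜ → Fin 3 × Fin (m + 3)))).card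
        ≤ (((cycleGraph 3 □ cycleGraph (m + 3)).induce Sᶜ).edgeFinset).card :=
      Finset.card_image_le
    have hunion := Finset.card_union_le
      (S.toFinset.biUnion (fun v => (cycleGraph 3 □ cycleGraph (m + 3)).incidenceFinset v))
      ((((cycleGraph 3 □ cycleGraph (m + 3)).induce Sᶜ).edgeFinset).image
        (Sym2.map (Subtype.val : ↥Sᶜ → Fin 3 × Fin (m + 3))))
    omega
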